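/- Let a, b ≥ 1 ≥ c ≥ 0 with b > 1 if c = 0, and define R(x) = ((ab−c)x+c)/((ab−a−c)x+a+c), T(x) = x/(x+a) on [0,1]. Then the orbit of any x ∈ (0,1] under the semigroup generated by R and T is dense in [0,1]. -/

import Mathlib

open Filter

namespace Stmt6Aux

/-! ### Generic word application -/

noncomputable def app (R T : ℝ → ℝ) (w : List Bool) (x : ℝ) : ℝ :=
  w.foldr (fun s z => if s then R z else T z) x

/-! ### Case A (c > 0): matrix / cylinder machinery -/

def qmul (M N : ℝ × ℝ × ℝ × ℝ) : ℝ × ℝ × ℝ × ℝ :=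
  (M.1 * N.1 + M.2.1 * N.2.2.1, M.1 * N.2.1 + M.2.1 * N.2.2.2,
   M.2.2.1 * N.1 + M.2.2.2 * N.2.2.1, M.2.2.1 * N.2.1 + M.2.2.2 * N.2.2.2)

def gm (a b c : ℝ) (s : Bool) : ℝ × ℝ × ℝ × ℝ :=
  if s then (a, 0, c, a * b) else (a, a, 0, 1)

def mw (a b c : ℝ) (w : List Bool) : ℝ × ℝ × ℝ × ℝ :=
  w.foldr (fun s M => qmul (gm a b c s) M) (1, 0, 0, 1)

noncomputable def kp (a b c : ℝ) : ℝ := min (1/2) (c / (a * b))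

noncomputable def Sh (n : ℕ) : ℝ := ∑ i ∈ Finset.range n, (1 : ℝ) / (i + 1)

def dt (M : ℝ × ℝ × ℝ × ℝ) : ℝ := M.1 * M.2.2.2 - M.2.1 * M.2.2.1

lemma qmul_assoc (M N P : ℝ × ℝ × ℝ × ℝ) : qmul (qmul M N) P = qmul M (qmul N P) := by
  obtain ⟨A, B, C, D⟩ := M; obtain ⟨E, F, G, H⟩ := N; obtain ⟨I, J, K, L⟩ := P
  simp only [qmul, Prod.mk.injEq]
  refine ⟨by ring, by ring, by ring, by ring⟩

lemma qmul_one (M : ℝ × ℝ × ℝ × ℝ) : qmul M (1, 0, 0, 1) = M := by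
  obtain ⟨A, B, C, D⟩ := M
  simp only [qmul, Prod.mk.injEq]
  refine ⟨by ring, by ring, by ring, by ring⟩

lemma one_qmul (M : ℝ × ℝ × ℝ × ℝ) : qmul (1, 0, 0, 1) M = M := by
  obtain ⟨A, B, C, D⟩ := M
  simp only [qmul, Prod.mk.injEq]
  refine ⟨by ring, by ring, by ring, by ring⟩

lemma mw_nil (a b c : ℝ) : mw a b c [] = (1, 0, 0, 1) := rfl

lemma mw_cons (a b c : ℝ) (s : Bool) (w : List Bool) :
    mw a b c (s :: w) = qmul (gm a b c s) (mw a b c w) := rfl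

lemma mw_append (a b c : ℝ) (w : List Bool) (s : Bool) :
    mw a b c (w ++ [s]) = qmul (mw a b c w) (gm a b c s) := by
  induction w with
  | nil => simp [mw_nil, mw, qmul_one, one_qmul]
  | cons t w ih =>
      simp only [List.cons_append, mw_cons, ih, qmul_assoc]

/-- Entrywise nonnegativity and positivity of column sums. -/
lemma mw_pos (a b c : ℝ) (ha : 1 ≤ a) (hb : 1 ≤ b) (hc0 : 0 ≤ c) (w : List Bool) :
    0 ≤ (mw a b c w).1 ∧ 0 ≤ (mw a b c w).2.1 ∧ 0 ≤ (mw a b c w).2.2.1 ∧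
      0 ≤ (mw a b c w).2.2.2 ∧ 0 < (mw a b c w).1 + (mw a b c w).2.2.1 ∧
      0 < (mw a b c w).2.1 + (mw a b c w).2.2.2 := by
  have ha0 : (0:ℝ) < a := by linarith
  have hb0 : (0:ℝ) < b := by linarith
  induction w with
  | nil => norm_num [mw_nil]
  | cons s w ih =>
      obtain ⟨h1, h2, h3, h4, h5, h6⟩ := ih
      rcases hM : mw a b c w with ⟨A, B, C, D⟩
      rw [hM] at h1 h2 h3 h4 h5 h6
      simp only at h1 h2 h3 h4 h5 h6
      cases s with
      | false =>
          simp only [mw_cons, hM, gm, if_false, Bool.false_eq_true, qmul]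
          refine ⟨by nlinarith, by nlinarith, by nlinarith, by nlinarith, by nlinarith,
            by nlinarith⟩
      | true =>
          simp only [mw_cons, hM, gm, if_true, qmul]
          refine ⟨by nlinarith, by nlinarith, ?_, ?_, ?_, ?_⟩
          · nlinarith [mul_nonneg hc0 h1, mul_nonneg (mul_nonneg ha0.le hb0.le) h3]
          · nlinarith [mul_nonneg hc0 h2, mul_nonneg (mul_nonneg ha0.le hb0.le) h4]
          · nlinarith [mul_nonneg hc0 h1, mul_pos ha0 h5,
              mul_nonneg (mul_nonneg ha0.le (sub_nonneg.mpr hb)) h3]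
          · nlinarith [mul_nonneg hc0 h2, mul_pos ha0 h6,
              mul_nonneg (mul_nonneg ha0.le (sub_nonneg.mpr hb)) h4]

set_option maxHeartbeats 2000000 in
/-- The big invariant, by right-append induction. -/
lemma mw_inv (a b c : ℝ) (ha : 1 ≤ a) (hb : 1 ≤ b) (hc1 : c ≤ 1) (hc0 : 0 < c)
    (w : List Bool) :
    (kp a b c) * ((mw a b c w).2.1 + (mw a b c w).2.2.2)
        ≤ (w.length + 1) * ((mw a b c w).1 + (mw a b c w).2.2.1) ∧
    (mw a b c w).1 + (mw a b c w).2.2.1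
        ≤ (w.length + 1) * ((mw a b c w).2.1 + (mw a b c w).2.2.2) ∧
    0 < dt (mw a b c w) ∧
    (1 + kp a b c * Sh w.length) * dt (mw a b c w)
        ≤ ((mw a b c w).1 + (mw a b c w).2.2.1) * ((mw a b c w).2.1 + (mw a b c w).2.2.2) := by
  have ha0 : (0:ℝ) < a := by linarith
  have hb0 : (0:ℝ) < b := by linarith
  have hab : (0:ℝ) < a * b := mul_pos ha0 hb0
  have hab1 : (1:ℝ) ≤ a * b := by nlinarith
  have hk_half : kp a b c ≤ 1/2 := min_le_left _ _
  have hk_le : kp a b c * (a * b) ≤ c := by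
    have h := min_le_right (1/2) (c / (a * b))
    calc kp a b c * (a * b) ≤ c / (a * b) * (a * b) :=
          mul_le_mul_of_nonneg_right h hab.le
      _ = c := by field_simp
  have hk0 : 0 < kp a b c := lt_min (by norm_num) (div_pos hc0 hab)
  induction w using List.reverseRecOn with
  | nil =>
      refine ⟨?_, ?_, ?_, ?_⟩ <;> simp [mw_nil, Sh, dt] <;> linarith
  | append_singleton w s ih =>
      obtain ⟨i3, i4, i9, i10⟩ := ih
      obtain ⟨h1, h2, h3, h4, h5, h6⟩ := mw_pos a b c ha hb hc0.le w
      rcases hM : mw a b c w with ⟨A, B, C, D⟩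
      rw [hM] at i3 i4 i9 i10 h1 h2 h3 h4 h5 h6
      simp only [dt] at i9 i10 ⊢
      have hlen : ((w ++ [s]).length : ℝ) = (w.length : ℝ) + 1 := by
        simp [List.length_append]
      set n : ℝ := (w.length : ℝ) with hn
      have hn0 : 0 ≤ n := Nat.cast_nonneg _
      have hn1 : (0:ℝ) < n + 1 := by linarith
      set u : ℝ := 1 / (n + 1) with hu
      have huu : (n + 1) * u = 1 := by rw [hu]; field_simp
      have hu0 : 0 ≤ u := by positivity
      have hSh : Sh (w ++ [s]).length = Sh w.length + u := by
        have hl2 : (w ++ [s]).length = w.length + 1 := by simp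
        rw [hl2, Sh, Finset.sum_range_succ, ← Sh, hu, hn]
      have hShnn : 0 ≤ Sh w.length := by
        apply Finset.sum_nonneg; intro i _; positivity
      have hdt_le : A * D - B * C ≤ (A + C) * (B + D) := by
        linarith [mul_nonneg (mul_nonneg hk0.le hShnn) i9.le, i10]
      rw [mw_append, hM, hlen, hSh]
      cases s with
      | false =>
          simp only [gm, if_false, Bool.false_eq_true, qmul]
          simp only [mul_zero, add_zero, mul_one, zero_mul, zero_add]
          have pac : (0:ℝ) < A + C := h5
          have t0 : A + C ≤ a * (A + C) := by
            linarith [mul_nonneg (sub_nonneg.mpr ha) pac.le]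
          have t1 : kp a b c * (a * (A + C)) ≤ a * (A + C) := by
            have := mul_le_mul_of_nonneg_right hk_half (mul_pos ha0 pac).le
            linarith
          have t2 : (n + 1) * (A + C) ≤ (n + 1) * (a * (A + C)) :=
            mul_le_mul_of_nonneg_left t0 hn1.le
          have g1 : kp a b c * (A * a + B + (C * a + D)) ≤ (n + 1 + 1) * (A * a + C * a) := by
            have s1 := add_le_add t1 (i3.trans t2)
            linarith [s1]
          have hbd : (0:ℝ) ≤ B + D := by linarith
          have g2 : A * a + C * a ≤ (n + 1 + 1) * (A * a + B + (C * a + D)) := by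
            have q1 : 0 ≤ (n + 1) * (a * (A + C)) :=
              mul_nonneg hn1.le (mul_pos ha0 pac).le
            have q2 : 0 ≤ (n + 1 + 1) * (B + D) := by
              apply mul_nonneg (by linarith) hbd
            linarith [q1, q2]
          refine ⟨g1, g2, by linarith [mul_pos ha0 i9], ?_⟩
          have key : kp a b c * (A * D - B * C) * u ≤ (A + C) * (A + C) := by
            have k1 : kp a b c * (A * D - B * C) ≤ (n + 1) * ((A + C) * (A + C)) := by
              have m1 := mul_le_mul_of_nonneg_left hdt_le hk0.le
              have m2 := mul_le_mul_of_nonneg_left i3 pac.le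
              linarith [m1, m2]
            calc kp a b c * (A * D - B * C) * u ≤ (n + 1) * ((A + C) * (A + C)) * u :=
                  mul_le_mul_of_nonneg_right k1 hu0
              _ = (n + 1) * u * ((A + C) * (A + C)) := by ring
              _ = (A + C) * (A + C) := by rw [huu]; ring
          have goal' : (1 + kp a b c * (Sh w.length + u)) * (A * D - B * C)
              ≤ (a - 1) * ((A + C) * (A + C)) + (A + C) * (A + C) + (A + C) * (B + D) := by
            have m5 : 0 ≤ (a - 1) * ((A + C) * (A + C)) :=
              mul_nonneg (sub_nonneg.mpr ha) (mul_nonneg pac.le pac.le)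
            linarith [m5, key, i10]
          calc (1 + kp a b c * (Sh w.length + u)) * (A * a * (C * a + D) - (A * a + B) * (C * a))
              = a * ((1 + kp a b c * (Sh w.length + u)) * (A * D - B * C)) := by ring
            _ ≤ a * ((a - 1) * ((A + C) * (A + C)) + (A + C) * (A + C) + (A + C) * (B + D)) :=
                mul_le_mul_of_nonneg_left goal' ha0.le
            _ = (A * a + C * a) * (A * a + B + (C * a + D)) := by ring
      | true =>
          simp only [gm, if_true, qmul]
          simp only [mul_zero, add_zero, mul_one, zero_mul, zero_add]
          have hkab : kp a b c * ((a * b) * (B + D)) ≤ c * (B + D) := by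
            have := mul_le_mul_of_nonneg_right hk_le h6.le
            linarith [this]
          have pac : (0:ℝ) < A + C := h5
          refine ⟨?_, ?_, by linarith [mul_pos (mul_pos (mul_pos ha0 ha0) hb0) i9], ?_⟩
          · have q1 : 0 ≤ (n + 1 + 1) * (a * (A + C)) := by
              apply mul_nonneg (by linarith) (mul_pos ha0 pac).le
            have q2 : 0 ≤ (n + 1) * (c * (B + D)) := by
              apply mul_nonneg hn1.le (mul_nonneg hc0.le h6.le)
            linarith [hkab, q1, q2]
          · have r1 : a * (A + C) ≤ a * ((n + 1) * (B + D)) :=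
              mul_le_mul_of_nonneg_left i4 ha0.le
            have r2 : a * ((n + 1) * (B + D)) ≤ (a * b) * ((n + 1) * (B + D)) := by
              have hq : 0 ≤ (n + 1) * (B + D) := mul_nonneg hn1.le h6.le
              apply mul_le_mul_of_nonneg_right _ hq
              linarith [mul_nonneg (sub_nonneg.mpr hb) ha0.le]
            have r3 : c * (B + D) ≤ (a * b) * (B + D) := by
              apply mul_le_mul_of_nonneg_right _ h6.le
              linarith
            linarith [r1, r2, r3]
          have key2 : kp a b c * a * (A * D - B * C) * u ≤ c * ((B + D) * (B + D)) := by
            have hka : kp a b c * a ≤ c := by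
              have hh : kp a b c * a ≤ kp a b c * (a * b) := by
                linarith [mul_nonneg (mul_pos hk0 ha0).le (sub_nonneg.mpr hb)]
              linarith
            have k1 : kp a b c * a * (A * D - B * C) ≤ c * (A * D - B * C) :=
              mul_le_mul_of_nonneg_right hka i9.le
            have k2 : c * (A * D - B * C) ≤ c * ((n + 1) * ((B + D) * (B + D))) := by
              apply mul_le_mul_of_nonneg_left _ hc0.le
              have m3 := mul_le_mul_of_nonneg_right i4 h6.le
              linarith [m3, hdt_le]
            calc kp a b c * a * (A * D - B * C) * u
                ≤ c * ((n + 1) * ((B + D) * (B + D))) * u :=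
                  mul_le_mul_of_nonneg_right (k1.trans k2) hu0
              _ = (n + 1) * u * (c * ((B + D) * (B + D))) := by ring
              _ = c * ((B + D) * (B + D)) := by rw [huu]; ring
          have goal' : (1 + kp a b c * (Sh w.length + u)) * (a * (A * D - B * C))
              ≤ a * ((A + C) * (B + D)) + c * ((B + D) * (B + D)) := by
            have m4 := mul_le_mul_of_nonneg_left i10 ha0.le
            linarith [m4, key2]
          calc (1 + kp a b c * (Sh w.length + u)) *
                ((A * a + B * c) * (D * (a * b)) - B * (a * b) * (C * a + D * c))
              = (a * b) * ((1 + kp a b c * (Sh w.length + u)) * (a * (A * D - B * C))) := by ring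
            _ ≤ (a * b) * (a * ((A + C) * (B + D)) + c * ((B + D) * (B + D))) :=
                mul_le_mul_of_nonneg_left goal' hab.le
            _ = (A * a + B * c + (C * a + D * c)) * (B * (a * b) + D * (a * b)) := by ring

lemma convex_pos {p q x : ℝ} (hp : 0 < p) (hq : 0 < q) (h0 : 0 ≤ x) (h1 : x ≤ 1) :
    0 < (1 - x) * p + x * q := by
  rcases lt_or_ge x 1 with h | h
  · have m1 := mul_pos (by linarith : (0:ℝ) < 1 - x) hp
    have m2 := mul_nonneg h0 hq.le
    linarith
  · have hx1 : x = 1 := le_antisymm h1 h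
    subst hx1; simpa using hq

/-- Representation of the word map as a Möbius transformation. -/
lemma rep (a b c : ℝ) (ha : 1 ≤ a) (hb : 1 ≤ b) (hc0 : 0 ≤ c)
    (R T : ℝ → ℝ)
    (hR : ∀ x : ℝ, R x = ((a * b - c) * x + c) / ((a * b - a - c) * x + (a + c)))
    (hT : ∀ x : ℝ, T x = x / (x + a))
    (w : List Bool) :
    ∀ x : ℝ, 0 ≤ x → x ≤ 1 →
      (0 < (1 - x) * ((mw a b c w).1 + (mw a b c w).2.2.1)
            + x * ((mw a b c w).2.1 + (mw a b c w).2.2.2)) ∧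
      app R T w x = ((1 - x) * (mw a b c w).2.2.1 + x * (mw a b c w).2.2.2) /
        ((1 - x) * ((mw a b c w).1 + (mw a b c w).2.2.1)
            + x * ((mw a b c w).2.1 + (mw a b c w).2.2.2)) := by
  have ha0 : (0:ℝ) < a := by linarith
  induction w with
  | nil =>
      intro x hx0 hx1
      constructor
      · simp [mw_nil]
      · simp [mw_nil, app]
  | cons s w ih =>
      intro x hx0 hx1
      obtain ⟨hQ, happ⟩ := ih x hx0 hx1
      obtain ⟨h1, h2, h3, h4, h5, h6⟩ := mw_pos a b c ha hb hc0 w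
      obtain ⟨h1', h2', h3', h4', h5', h6'⟩ := mw_pos a b c ha hb hc0 (s :: w)
      have hQ' : 0 < (1 - x) * ((mw a b c (s :: w)).1 + (mw a b c (s :: w)).2.2.1)
          + x * ((mw a b c (s :: w)).2.1 + (mw a b c (s :: w)).2.2.2) :=
        convex_pos h5' h6' hx0 hx1
      refine ⟨hQ', ?_⟩
      rcases hM : mw a b c w with ⟨A, B, C, D⟩
      rw [hM] at hQ happ h1 h2 h3 h4 h5 h6
      simp only at hQ happ h1 h2 h3 h4 h5 h6
      set P : ℝ := (1 - x) * C + x * D with hP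
      set Q : ℝ := (1 - x) * (A + C) + x * (B + D) with hQdef
      have hPnn : 0 ≤ P := by
        have := mul_nonneg (by linarith : (0:ℝ) ≤ 1 - x) h3
        have := mul_nonneg hx0 h4
        rw [hP]; linarith
      have happ2 : app R T w x = P / Q := by
        rw [happ]
      have happc : app R T (s :: w) x
          = if s then R (app R T w x) else T (app R T w x) := rfl
      rw [mw_cons, hM] at hQ' ⊢
      cases s with
      | false =>
          simp only [gm, if_false, Bool.false_eq_true, qmul] at hQ' ⊢
          simp only [mul_zero, add_zero, mul_one, zero_mul, zero_add, mul_comm] at hQ' ⊢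
          have hden : 0 < P + a * Q := by positivity
          rw [happc, if_neg (by simp), hT, happ2]
          have e1 : P / Q + a = (P + a * Q) / Q := by field_simp
          rw [e1, div_div_div_cancel_right₀ hQ.ne', hP, hQdef]
          ring
      | true =>
          simp only [gm, if_true, qmul] at hQ' ⊢
          simp only [mul_zero, add_zero, mul_one, zero_mul, zero_add] at hQ' ⊢
          rw [happc, if_pos rfl, hR, happ2]
          have e1 : (a * b - c) * (P / Q) + c = ((a * b - c) * P + c * Q) / Q := by
            field_simp
          have e2 : (a * b - a - c) * (P / Q) + (a + c)
              = ((a * b - a - c) * P + (a + c) * Q) / Q := by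
            field_simp
          rw [e1, e2, div_div_div_cancel_right₀ hQ.ne']
          have eP : (1 - x) * (c * A + a * b * C) + x * (c * B + a * b * D)
              = (a * b - c) * P + c * Q := by rw [hP, hQdef]; ring
          have eQ : (1 - x) * (a * A + (c * A + a * b * C)) + x * (a * B + (c * B + a * b * D))
              = (a * b - a - c) * P + (a + c) * Q := by rw [hP, hQdef]; ring
          rw [eP, eQ]

/-- Covering: every point of [0,1] lies in some cylinder of each length. -/
lemma cover (a b c : ℝ) (ha : 1 ≤ a) (hb : 1 ≤ b) (hc1 : c ≤ 1) (hc0 : 0 < c)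
    (R T : ℝ → ℝ)
    (hR : ∀ x : ℝ, R x = ((a * b - c) * x + c) / ((a * b - a - c) * x + (a + c)))
    (hT : ∀ x : ℝ, T x = x / (x + a))
    (n : ℕ) (t : ℝ) (ht0 : 0 ≤ t) (ht1 : t ≤ 1) :
    ∃ w : List Bool, w.length = n ∧ ∃ s : ℝ, 0 ≤ s ∧ s ≤ 1 ∧ app R T w s = t := by
  have ha0 : (0:ℝ) < a := by linarith
  have hb0 : (0:ℝ) < b := by linarith
  have hab1 : (1:ℝ) ≤ a * b := by nlinarith
  -- single step surjectivity
  have step : ∀ t : ℝ, 0 ≤ t → t ≤ 1 →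
      ∃ (s : ℝ) (ℓ : Bool), 0 ≤ s ∧ s ≤ 1 ∧ (if ℓ then R s else T s) = t := by
    intro t ht0 ht1
    rcases le_or_gt t (1 / (1 + a)) with hcase | hcase
    · -- use T
      have h1t : 0 < 1 - t := by
        have : 1 / (1 + a) < 1 := by
          rw [div_lt_one (by linarith)]; linarith
        linarith
      refine ⟨a * t / (1 - t), false, by positivity, ?_, ?_⟩
      · rw [div_le_one h1t]
        have : t * (1 + a) ≤ 1 := by
          rw [← le_div_iff₀ (by linarith : (0:ℝ) < 1 + a)]
          exact hcase
        nlinarith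
      · simp only [if_false, Bool.false_eq_true]
        rw [hT]
        have hden : a * t / (1 - t) + a = a / (1 - t) := by
          field_simp
          ring
        rw [hden]
        rw [div_div_div_cancel_right₀ h1t.ne' (a * t) a]
        rw [mul_comm, mul_div_assoc, div_self ha0.ne', mul_one]
    · -- use R
      have ht0' : 0 < t := by
        have : (0:ℝ) < 1 / (1 + a) := by positivity
        linarith
      have hD : 0 < (1 - t) * (a * b - c) + a * t := by
        have m1 : 0 ≤ (1 - t) * (a * b - c) :=
          mul_nonneg (by linarith) (by linarith)
        nlinarith
      set s : ℝ := ((a + c) * t - c) / ((1 - t) * (a * b - c) + a * t) with hs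
      have hnum : 0 ≤ (a + c) * t - c := by
        -- t > 1/(1+a) ≥ c/(a+c)
        have hac : (0:ℝ) < a + c := by linarith
        have key : c * (1 + a) ≤ a + c := by nlinarith
        have : c / (a + c) ≤ 1 / (1 + a) := by
          rw [div_le_div_iff₀ hac (by linarith)]
          linarith
        have : c / (a + c) ≤ t := by linarith
        rw [div_le_iff₀ hac] at this
        linarith
      refine ⟨s, true, by positivity, ?_, ?_⟩
      · rw [hs, div_le_one hD]
        nlinarith
      · simp only [if_true]
        rw [hR]
        have e1 : (a * b - c) * s + c
            = (a * a * b * t) / ((1 - t) * (a * b - c) + a * t) := by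
          rw [hs, mul_div_assoc', div_add' _ _ _ hD.ne']
          congr 1
          ring
        have e2 : (a * b - a - c) * s + (a + c)
            = (a * a * b) / ((1 - t) * (a * b - c) + a * t) := by
          rw [hs]
          field_simp
          ring
        rw [e1, e2, div_div_div_cancel_right₀ hD.ne']
        rw [mul_comm (a * a * b) t, mul_div_assoc, div_self (by positivity : (a*a*b : ℝ) ≠ 0),
          mul_one]
  induction n with
  | zero => exact ⟨[], rfl, t, ht0, ht1, rfl⟩
  | succ n ih =>
      obtain ⟨w, hw, s, hs0, hs1, hws⟩ := ih
      obtain ⟨s', ℓ, hs0', hs1', hstep⟩ := step s hs0 hs1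
      refine ⟨w ++ [ℓ], by simp [hw], s', hs0', hs1', ?_⟩
      unfold app
      rw [List.foldr_append]
      simp only [List.foldr_cons, List.foldr_nil]
      rw [hstep]
      exact hws

/-! ### Case B (c = 0): affine machinery in the variable y = (1-x)/x -/

noncomputable def bo (a b τ : ℝ) : ℕ → ℝ
  | 0 => τ
  | n + 1 => if bo a b τ n < a then b * bo a b τ n else bo a b τ n / a - 1

noncomputable def bw (a b τ : ℝ) : ℕ → List Bool
  | 0 => []
  | n + 1 => bw a b τ n ++ [decide (bo a b τ n < a)]

noncomputable def affT (a b : ℝ) (w : List Bool) (z : ℝ) : ℝ :=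
  w.foldr (fun s u => if s then u / b else a * (u + 1)) z

noncomputable def slp (a b : ℝ) (w : List Bool) : ℝ :=
  w.foldr (fun s p => if s then p / b else a * p) 1

lemma bw_length (a b τ : ℝ) (n : ℕ) : (bw a b τ n).length = n := by
  induction n with
  | zero => rfl
  | succ n ih => simp [bw, ih]

lemma bo_nonneg (a b τ : ℝ) (ha : 1 ≤ a) (hb : 1 < b) (hτ : 0 ≤ τ) (n : ℕ) :
    0 ≤ bo a b τ n := by
  induction n with
  | zero => exact hτ
  | succ n ih =>
      rw [bo]
      split
      · positivity
      · rw [sub_nonneg, le_div_iff₀ (by linarith)]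
        next h => push_neg at h; linarith

lemma aff_sub (a b : ℝ) (w : List Bool) (u v : ℝ) :
    affT a b w u - affT a b w v = slp a b w * (u - v) := by
  induction w with
  | nil => simp [affT, slp]
  | cons s w ih =>
      cases s <;> simp only [affT, slp, List.foldr_cons] at * <;>
        simp only [if_true, if_false, Bool.false_eq_true]
      · linear_combination a * ih
      · linear_combination ih / b

lemma slp_pos (a b : ℝ) (ha : 0 < a) (hb : 0 < b) (w : List Bool) : 0 < slp a b w := by
  induction w with
  | nil => norm_num [slp]
  | cons s w ih => cases s <;> simp only [slp, List.foldr_cons] at * <;> simp <;> positivity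

lemma aff_nonneg (a b : ℝ) (ha : 1 ≤ a) (hb : 0 < b) (w : List Bool) (z : ℝ) (hz : 0 ≤ z) :
    0 ≤ affT a b w z := by
  induction w with
  | nil => exact hz
  | cons s w ih => cases s <;> simp only [affT, List.foldr_cons] at * <;> simp <;> positivity

lemma slp_init (a b : ℝ) (w : List Bool) (z : ℝ) :
    w.foldr (fun s p => if s then p / b else a * p) z = slp a b w * z := by
  induction w with
  | nil => simp [slp]
  | cons s w ih =>
      cases s <;> simp only [slp, List.foldr_cons] at * <;> simp [ih] <;> ring

lemma slp_append (a b : ℝ) (w : List Bool) (s : Bool) :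
    slp a b (w ++ [s]) = slp a b w * (if s then 1 / b else a) := by
  unfold slp
  rw [List.foldr_append]
  simp only [List.foldr_cons, List.foldr_nil]
  cases s <;> simp [slp_init a b w] <;> ring

lemma affT_append (a b : ℝ) (w : List Bool) (s : Bool) (z : ℝ) :
    affT a b (w ++ [s]) z = affT a b w (if s then z / b else a * (z + 1)) := by
  unfold affT
  rw [List.foldr_append]
  cases s <;> simp

lemma aff_inv (a b τ : ℝ) (ha : 1 ≤ a) (hb : 1 < b) (n : ℕ) :
    affT a b (bw a b τ n) (bo a b τ n) = τ := by
  induction n with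
  | zero => rfl
  | succ n ih =>
      rw [bw, affT_append, bo]
      by_cases h : bo a b τ n < a
      · simp only [h, if_pos, decide_eq_true_eq]
        rw [mul_div_cancel_left₀ _ (by linarith : (b:ℝ) ≠ 0)]
        exact ih
      · simp only [h, decide_eq_false h, if_false, Bool.false_eq_true]
        have : a * (bo a b τ n / a - 1 + 1) = bo a b τ n := by
          field_simp
          ring
        rw [this]
        exact ih

noncomputable def Pi' (a b τ : ℝ) (n : ℕ) : ℝ := slp a b (bw a b τ n) * (bo a b τ n + 1)

lemma Pi'_step (a b τ : ℝ) (ha : 1 ≤ a) (hb : 1 < b) (hτ : 0 ≤ τ) (n : ℕ) :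
    Pi' a b τ (n + 1) ≤ Pi' a b τ n ∧
    (bo a b τ n < a → Pi' a b τ (n + 1) ≤ (1 - (b - 1) / (b * (a + 1))) * Pi' a b τ n) := by
  have ha0 : (0:ℝ) < a := by linarith
  have hb0 : (0:ℝ) < b := by linarith
  have hy := bo_nonneg a b τ ha hb hτ n
  have hslp := slp_pos a b ha0 hb0 (bw a b τ n)
  by_cases h : bo a b τ n < a
  · have hw : bw a b τ (n+1) = bw a b τ n ++ [true] := by
      rw [bw, decide_eq_true h]
    have hbo : bo a b τ (n+1) = b * bo a b τ n := by rw [bo, if_pos h]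
    have hsl : slp a b (bw a b τ (n+1)) = slp a b (bw a b τ n) * (1 / b) := by
      rw [hw, slp_append]; simp
    set θd : ℝ := (b - 1) / (b * (a + 1)) with hθd_def
    have hθd : θd * (b * (a + 1)) = b - 1 := by
      rw [hθd_def]; field_simp
    have hθdnn : 0 ≤ θd := by
      rw [hθd_def]
      apply div_nonneg (by linarith) (by positivity)
    have hkey : b * bo a b τ n + 1 ≤ (1 - θd) * (b * (bo a b τ n + 1)) := by
      have m1 : θd * b * (bo a b τ n + 1) ≤ θd * b * (a + 1) := by
        apply mul_le_mul_of_nonneg_left (by linarith) (mul_nonneg hθdnn hb0.le)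
      nlinarith [hθd, m1]
    constructor
    · show Pi' a b τ (n+1) ≤ Pi' a b τ n
      unfold Pi'
      rw [hsl, hbo]
      have step1 : slp a b (bw a b τ n) * (1 / b) * (b * bo a b τ n + 1)
          ≤ slp a b (bw a b τ n) * (1 / b) * ((1 - θd) * (b * (bo a b τ n + 1))) := by
        apply mul_le_mul_of_nonneg_left hkey (mul_nonneg hslp.le (by positivity))
      refine step1.trans ?_
      have e2 : slp a b (bw a b τ n) * (1 / b) * ((1 - θd) * (b * (bo a b τ n + 1)))
          = (1 - θd) * (slp a b (bw a b τ n) * (bo a b τ n + 1)) := by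
        field_simp
      rw [e2]
      have hpp : 0 ≤ slp a b (bw a b τ n) * (bo a b τ n + 1) := by positivity
      nlinarith [mul_nonneg hθdnn hpp]
    · intro _
      unfold Pi'
      rw [hsl, hbo]
      have step1 : slp a b (bw a b τ n) * (1 / b) * (b * bo a b τ n + 1)
          ≤ slp a b (bw a b τ n) * (1 / b) * ((1 - θd) * (b * (bo a b τ n + 1))) := by
        apply mul_le_mul_of_nonneg_left hkey (mul_nonneg hslp.le (by positivity))
      refine step1.trans (le_of_eq ?_)
      field_simp
  · have hw : bw a b τ (n+1) = bw a b τ n ++ [false] := by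
      rw [bw, decide_eq_false h]
    have hbo : bo a b τ (n+1) = bo a b τ n / a - 1 := by rw [bo, if_neg h]
    have hsl : slp a b (bw a b τ (n+1)) = slp a b (bw a b τ n) * a := by
      rw [hw, slp_append]; simp
    have heq : Pi' a b τ (n+1) = slp a b (bw a b τ n) * bo a b τ n := by
      unfold Pi'
      rw [hsl, hbo]
      field_simp
      ring
    constructor
    · rw [heq]
      unfold Pi'
      nlinarith [hslp]
    · intro hcon
      exact absurd hcon h

lemma Pi'_mono (a b τ : ℝ) (ha : 1 ≤ a) (hb : 1 < b) (hτ : 0 ≤ τ) {m n : ℕ} (h : m ≤ n) :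
    Pi' a b τ n ≤ Pi' a b τ m := by
  induction n, h using Nat.le_induction with
  | base => exact le_refl _
  | succ n hmn ih => exact le_trans (Pi'_step a b τ ha hb hτ n).1 ih

lemma no_all_T (a b τ : ℝ) (ha : 1 ≤ a) (hb : 1 < b) (hτ : 0 ≤ τ) (N : ℕ) :
    ∃ k, N ≤ k ∧ bo a b τ k < a := by
  by_contra hcon
  push_neg at hcon
  have hdesc : ∀ m : ℕ, bo a b τ (N + m) ≤ bo a b τ N - m := by
    intro m
    induction m with
    | zero => simp
    | succ m ih =>
        have hge : a ≤ bo a b τ (N + m) := hcon (N + m) (Nat.le_add_right _ _)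
        have hpos := bo_nonneg a b τ ha hb hτ (N + m)
        have : bo a b τ (N + m + 1) = bo a b τ (N + m) / a - 1 := by
          rw [bo, if_neg (not_lt.mpr hge)]
        rw [show N + (m + 1) = N + m + 1 from rfl, this]
        have hdiv : bo a b τ (N + m) / a ≤ bo a b τ (N + m) :=
          div_le_self hpos ha
        push_cast
        linarith
  obtain ⟨m, hm⟩ := exists_nat_gt (bo a b τ N)
  have h1 := hdesc m
  have h2 := bo_nonneg a b τ ha hb hτ (N + m)
  linarith

lemma Pi'_decay (a b τ : ℝ) (ha : 1 ≤ a) (hb : 1 < b) (hτ : 0 ≤ τ) (j : ℕ) :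
    ∃ n, j ≤ n ∧ Pi' a b τ n ≤ (1 - (b - 1) / (b * (a + 1))) ^ j * (τ + 1) := by
  have hθnn : (0:ℝ) ≤ 1 - (b - 1) / (b * (a + 1)) := by
    have h1 : (b - 1) / (b * (a + 1)) ≤ 1 := by
      rw [div_le_one (by positivity)]
      nlinarith
    linarith
  induction j with
  | zero =>
      refine ⟨0, le_refl _, ?_⟩
      simp [Pi', bw, bo, slp]
  | succ j ih =>
      obtain ⟨n, hjn, hPn⟩ := ih
      obtain ⟨k, hnk, hk⟩ := no_all_T a b τ ha hb hτ n
      have h1 : Pi' a b τ (k + 1) ≤ (1 - (b - 1) / (b * (a + 1))) * Pi' a b τ k :=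
        (Pi'_step a b τ ha hb hτ k).2 hk
      have h2 : Pi' a b τ k ≤ Pi' a b τ n := Pi'_mono a b τ ha hb hτ hnk
      refine ⟨k + 1, by omega, ?_⟩
      calc Pi' a b τ (k + 1) ≤ (1 - (b - 1) / (b * (a + 1))) * Pi' a b τ k := h1
        _ ≤ (1 - (b - 1) / (b * (a + 1))) * ((1 - (b - 1) / (b * (a + 1))) ^ j * (τ + 1)) := by
            apply mul_le_mul_of_nonneg_left (h2.trans hPn) hθnn
        _ = (1 - (b - 1) / (b * (a + 1))) ^ (j + 1) * (τ + 1) := by ring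

lemma bridge (a b : ℝ) (ha : 1 ≤ a) (hb : 1 < b)
    (R T : ℝ → ℝ)
    (hR : ∀ x : ℝ, R x = ((a * b - 0) * x + 0) / ((a * b - a - 0) * x + (a + 0)))
    (hT : ∀ x : ℝ, T x = x / (x + a))
    (w : List Bool) (z : ℝ) (hz : 0 ≤ z) :
    app R T w (1 / (1 + z)) = 1 / (1 + affT a b w z) := by
  have ha0 : (0:ℝ) < a := by linarith
  have hb0 : (0:ℝ) < b := by linarith
  induction w with
  | nil => rfl
  | cons s w ih =>
      have hu : 0 ≤ affT a b w z := aff_nonneg a b ha hb0 w z hz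
      have happc : app R T (s :: w) (1 / (1 + z))
          = if s then R (app R T w (1 / (1 + z))) else T (app R T w (1 / (1 + z))) := rfl
      rw [happc, ih]
      set u : ℝ := affT a b w z with hudef
      have h1u : (0:ℝ) < 1 + u := by linarith
      cases s with
      | false =>
          simp only [if_false, Bool.false_eq_true]
          rw [hT]
          have haff : affT a b (false :: w) z = a * (u + 1) := rfl
          rw [haff]
          have e1 : 1 / (1 + u) + a = (1 + a * (u + 1)) / (1 + u) := by
            field_simp
            ring

          rw [e1, div_div_div_cancel_right₀ h1u.ne']
      | true =>
          simp only [if_true]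
          rw [hR]
          have haff : affT a b (true :: w) z = u / b := rfl
          rw [haff]
          have e1 : (a * b - 0) * (1 / (1 + u)) + 0 = (a * b) / (1 + u) := by
            field_simp
            ring
          have e2 : (a * b - a - 0) * (1 / (1 + u)) + (a + 0) = (a * b + a * u) / (1 + u) := by
            field_simp
            ring
          rw [e1, e2, div_div_div_cancel_right₀ h1u.ne']
          rw [div_eq_div_iff (by positivity) (by positivity)]
          field_simp

lemma Tn_small (a : ℝ) (ha : 1 ≤ a) (T R : ℝ → ℝ) (hT : ∀ x : ℝ, T x = x / (x + a))
    (n : ℕ) (x : ℝ) (hx0 : 0 ≤ x) (hx1 : x ≤ 1) :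
    0 ≤ app R T (List.replicate n false) x ∧
      app R T (List.replicate n false) x ≤ 1 / (n + 1) := by
  have ha0 : (0:ℝ) < a := by linarith
  induction n with
  | zero => constructor <;> simpa [app]
  | succ n ih =>
      obtain ⟨ih0, ih1⟩ := ih
      have hrep : List.replicate (n + 1) false = false :: List.replicate n false :=
        List.replicate_succ
      set z : ℝ := app R T (List.replicate n false) x with hz
      have happ : app R T (List.replicate (n + 1) false) x = T z := by
        rw [hrep]; rfl
      rw [happ, hT]
      have hza : (0:ℝ) < z + a := by linarith
      constructor
      · positivity
      · have h1 : z / (z + a) ≤ z / (z + 1) := by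
          apply div_le_div_of_nonneg_left ih0 (by linarith) (by linarith)
        have h2 : z / (z + 1) ≤ 1 / (n + 1 + 1) := by
          rw [div_le_div_iff₀ (by linarith) (by positivity)]
          have : z * (n + 1) ≤ 1 := by
            rw [← le_div_iff₀ (by positivity : (0:ℝ) < (n:ℝ) + 1)]
            exact ih1
          linarith
        push_cast
        linarith

lemma cyl_lo (A B C D u : ℝ) (h5 : 0 < A + C) (h6 : 0 < B + D) (i9 : 0 < A*D - B*C)
    (hu0 : 0 ≤ u) (hu1 : u ≤ 1) (hQu : 0 < (1-u)*(A+C) + u*(B+D)) :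
    C/(A+C) ≤ ((1-u)*C + u*D)/((1-u)*(A+C) + u*(B+D)) ∧
      ((1-u)*C + u*D)/((1-u)*(A+C) + u*(B+D)) ≤ D/(B+D) := by
  constructor
  · rw [div_le_div_iff₀ h5 hQu]
    nlinarith [mul_nonneg hu0 i9.le]
  · rw [div_le_div_iff₀ hQu h6]
    nlinarith [mul_nonneg (by linarith : (0:ℝ) ≤ 1 - u) i9.le]

lemma cyl_width (A B C D S : ℝ) (h5 : 0 < A + C) (h6 : 0 < B + D) (hS : 0 < 1 + S)
    (i10 : (1 + S) * (A*D - B*C) ≤ (A+C)*(B+D)) :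
    D/(B+D) - C/(A+C) ≤ 1/(1+S) := by
  rw [div_sub_div _ _ h6.ne' h5.ne', div_le_div_iff₀ (mul_pos h6 h5) hS]
  nlinarith [i10]

lemma cyl_final {lo hi p q W ε : ℝ} (h1 : lo ≤ p) (h2 : p ≤ hi) (h3 : lo ≤ q)
    (h4 : q ≤ hi) (h5 : hi - lo ≤ W) (h6 : W < ε) : |p - q| < ε := by
  rw [abs_lt]
  constructor <;> linarith

lemma Sh_tendsto : Filter.Tendsto Sh Filter.atTop Filter.atTop := by
  have h := Real.tendsto_sum_range_one_div_nat_succ_atTop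
  convert h using 2
  rfl

end Stmt6Aux

/-- density of orbits for R(x) = ((ab−c)x+c)/((ab−a−c)x+a+c) and
T(x) = x/(x+a), with a, b ≥ 1 ≥ c ≥ 0 and b > 1 if c = 0. -/
theorem stmt_6 (a b c : ℝ) (ha : 1 ≤ a) (hb : 1 ≤ b) (hc1 : c ≤ 1) (hc0 : 0 ≤ c)
    (hbc : c = 0 → 1 < b)
    (R T : ℝ → ℝ)
    (hR : ∀ x : ℝ, R x = ((a * b - c) * x + c) / ((a * b - a - c) * x + (a + c)))
    (hT : ∀ x : ℝ, T x = x / (x + a)) :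
    ∀ x ∈ Set.Ioc (0:ℝ) 1, Set.Icc (0:ℝ) 1 ⊆
      closure {y | ∃ w : List Bool, w ≠ [] ∧
        y = w.foldr (fun s z => if s then R z else T z) x} := by
  intro x hx t ht
  obtain ⟨hx0, hx1⟩ := hx
  obtain ⟨ht0, ht1⟩ := ht
  rw [Metric.mem_closure_iff]
  intro ε hε
  rcases eq_or_lt_of_le hc0 with hc | hc
  · -- c = 0 case
    have hb1 : 1 < b := hbc hc.symm
    subst hc
    have ha0 : (0:ℝ) < a := by linarith
    rcases eq_or_lt_of_le ht0 with ht | ht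
    · -- t = 0
      obtain ⟨n, hn⟩ := exists_nat_gt (1/ε)
      have hn0 : (0:ℝ) ≤ n := Nat.cast_nonneg _
      refine ⟨Stmt6Aux.app R T (List.replicate (n+1) false) x,
        ⟨List.replicate (n+1) false, by simp, rfl⟩, ?_⟩
      obtain ⟨hp0, hp1⟩ := Stmt6Aux.Tn_small a ha T R hT (n+1) x hx0.le hx1
      rw [Real.dist_eq, ← ht]
      rw [abs_sub_comm, abs_of_nonneg (by linarith)]
      have hlt : (1:ℝ) / (↑(n+1) + 1) < ε := by
        rw [div_lt_iff₀ (by positivity)]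
        have h2 : 1/ε < (n:ℝ) + 2 := by push_cast; linarith
        rw [div_lt_iff₀ hε] at h2
        push_cast
        linarith
      calc Stmt6Aux.app R T (List.replicate (n+1) false) x - 0
          ≤ 1 / (↑(n+1) + 1) := by linarith
        _ < ε := hlt
    · -- t > 0
      set τ : ℝ := (1 - t) / t with hτdef
      set Y : ℝ := (1 - x) / x with hYdef
      have hτ0 : 0 ≤ τ := div_nonneg (by linarith) (by linarith)
      have hY0 : 0 ≤ Y := div_nonneg (by linarith) (by linarith)
      have hxid : 1 / (1 + Y) = x := by
        rw [hYdef]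
        rw [show (1:ℝ) + (1 - x) / x = 1 / x by field_simp; ring]
        rw [one_div_one_div]
      have htid : 1 / (1 + τ) = t := by
        rw [hτdef]
        rw [show (1:ℝ) + (1 - t) / t = 1 / t by field_simp; ring]
        rw [one_div_one_div]
      set θ : ℝ := 1 - (b - 1) / (b * (a + 1)) with hθdef
      have hθlt : θ < 1 := by
        rw [hθdef]
        have : 0 < (b - 1) / (b * (a + 1)) := by
          apply div_pos (by linarith) (by positivity)
        linarith
      have hθnn : 0 ≤ θ := by
        rw [hθdef]
        have : (b - 1) / (b * (a + 1)) ≤ 1 := by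
          rw [div_le_one (by positivity)]
          nlinarith
        linarith
      have hMpos : (0:ℝ) < (τ + 1) * (Y + 1) :=
        mul_pos (by linarith) (by linarith)
      obtain ⟨j0, hj0⟩ := exists_pow_lt_of_lt_one (div_pos hε hMpos) hθlt
      set j := j0 + 1 with hjdef
      have hθj : θ ^ j * ((τ + 1) * (Y + 1)) < ε := by
        have h1 : θ ^ j ≤ θ ^ j0 := by
          rw [hjdef, pow_succ]
          exact mul_le_of_le_one_right (pow_nonneg hθnn j0) hθlt.le
        have h2 : θ ^ j0 * ((τ + 1) * (Y + 1)) < ε := by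
          rw [← lt_div_iff₀ hMpos]
          exact hj0
        exact lt_of_le_of_lt (mul_le_mul_of_nonneg_right h1 hMpos.le) h2
      obtain ⟨n, hjn, hPn⟩ := Stmt6Aux.Pi'_decay a b τ ha hb1 hτ0 j
      set w := Stmt6Aux.bw a b τ n with hwdef
      have hwne : w ≠ [] := by
        have hl := Stmt6Aux.bw_length a b τ n
        intro hcon
        rw [hwdef] at hcon
        rw [hcon] at hl
        simp at hl
        omega
      refine ⟨Stmt6Aux.app R T w x, ⟨w, hwne, rfl⟩, ?_⟩
      set u : ℝ := Stmt6Aux.affT a b w Y with hudef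
      have hu0 : 0 ≤ u := Stmt6Aux.aff_nonneg a b ha (by linarith) w Y hY0
      have hpu : Stmt6Aux.app R T w x = 1 / (1 + u) := by
        rw [← hxid]
        exact Stmt6Aux.bridge a b ha hb1 R T (by simpa using hR) hT w Y hY0
      have hτeq : Stmt6Aux.affT a b w (Stmt6Aux.bo a b τ n) = τ :=
        Stmt6Aux.aff_inv a b τ ha hb1 n
      have hslp : 0 < Stmt6Aux.slp a b w := Stmt6Aux.slp_pos a b ha0 (by linarith) w
      have hbo0 : 0 ≤ Stmt6Aux.bo a b τ n := Stmt6Aux.bo_nonneg a b τ ha hb1 hτ0 n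
      have hsub : u - τ = Stmt6Aux.slp a b w * (Y - Stmt6Aux.bo a b τ n) := by
        have h := Stmt6Aux.aff_sub a b w Y (Stmt6Aux.bo a b τ n)
        rw [hτeq] at h
        exact h
      have hPi : Stmt6Aux.slp a b w * (Stmt6Aux.bo a b τ n + 1) = Stmt6Aux.Pi' a b τ n := rfl
      have habs1 : |u - τ| ≤ Stmt6Aux.Pi' a b τ n * (Y + 1) := by
        rw [hsub, abs_mul, abs_of_pos hslp]
        have h1 : |Y - Stmt6Aux.bo a b τ n| ≤ Y + Stmt6Aux.bo a b τ n := by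
          rw [abs_le]; constructor <;> linarith
        have h2 : Stmt6Aux.slp a b w * |Y - Stmt6Aux.bo a b τ n|
            ≤ Stmt6Aux.slp a b w * (Y + Stmt6Aux.bo a b τ n) :=
          mul_le_mul_of_nonneg_left h1 hslp.le
        have h3 : Stmt6Aux.slp a b w ≤ Stmt6Aux.Pi' a b τ n := by
          rw [← hPi]
          have := mul_le_mul_of_nonneg_left
            (by linarith : (1:ℝ) ≤ Stmt6Aux.bo a b τ n + 1) hslp.le
          linarith
        have h4 : Stmt6Aux.slp a b w * Stmt6Aux.bo a b τ n ≤ Stmt6Aux.Pi' a b τ n := by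
          rw [← hPi]
          have := mul_le_mul_of_nonneg_left
            (by linarith : Stmt6Aux.bo a b τ n ≤ Stmt6Aux.bo a b τ n + 1) hslp.le
          linarith
        have h5 : Stmt6Aux.slp a b w * Y ≤ Stmt6Aux.Pi' a b τ n * Y :=
          mul_le_mul_of_nonneg_right h3 hY0
        linarith [h2, h4, h5]
      have hdist : dist t (Stmt6Aux.app R T w x) ≤ |u - τ| := by
        rw [Real.dist_eq, hpu, ← htid]
        have e : 1 / (1 + τ) - 1 / (1 + u) = (u - τ) / ((1 + τ) * (1 + u)) := by
          field_simp
          ring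
        rw [e, abs_div, abs_of_pos (mul_pos (by linarith : (0:ℝ) < 1 + τ)
          (by linarith : (0:ℝ) < 1 + u))]
        apply div_le_self (abs_nonneg _)
        nlinarith [mul_nonneg hτ0 hu0]
      have hfin : Stmt6Aux.Pi' a b τ n * (Y + 1) < ε := by
        have h6 : Stmt6Aux.Pi' a b τ n * (Y + 1) ≤ θ ^ j * (τ + 1) * (Y + 1) := by
          apply mul_le_mul_of_nonneg_right _ (by linarith)
          rw [hθdef] at *
          exact hPn
        calc Stmt6Aux.Pi' a b τ n * (Y + 1) ≤ θ ^ j * (τ + 1) * (Y + 1) := h6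
          _ = θ ^ j * ((τ + 1) * (Y + 1)) := by ring
          _ < ε := hθj
      calc dist t (Stmt6Aux.app R T w x) ≤ |u - τ| := hdist
        _ ≤ Stmt6Aux.Pi' a b τ n * (Y + 1) := habs1
        _ < ε := hfin
  · -- c > 0 case
    have hk0 : 0 < Stmt6Aux.kp a b c :=
      lt_min (by norm_num) (div_pos hc (by nlinarith))
    -- choose n
    obtain ⟨n, hn1, hShn⟩ : ∃ n : ℕ, 1 ≤ n ∧
        1 / (Stmt6Aux.kp a b c * ε) ≤ Stmt6Aux.Sh n := by
      obtain ⟨N, hN⟩ := Filter.eventually_atTop.mp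
        (Filter.Tendsto.eventually_ge_atTop Stmt6Aux.Sh_tendsto
          (1 / (Stmt6Aux.kp a b c * ε)))
      exact ⟨max N 1, le_max_right _ _, hN _ (le_max_left _ _)⟩
    have hgoal : 1 / (1 + Stmt6Aux.kp a b c * Stmt6Aux.Sh n) < ε := by
      have h0 : Stmt6Aux.kp a b c * (1 / (Stmt6Aux.kp a b c * ε)) = 1 / ε := by
        field_simp
      have h1 : 1 / ε ≤ Stmt6Aux.kp a b c * Stmt6Aux.Sh n := by
        rw [← h0]
        exact mul_le_mul_of_nonneg_left hShn hk0.le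
      have h2 : (0:ℝ) < 1 / ε := by positivity
      rw [div_lt_iff₀ (by linarith)]
      have h3 : ε * (1 / ε) = 1 := by field_simp
      nlinarith
    obtain ⟨w, hwlen, s, hs0, hs1, hws⟩ :=
      Stmt6Aux.cover a b c ha hb hc1 hc R T hR hT n t ht0 ht1
    have hwne : w ≠ [] := by
      intro hcon
      rw [hcon] at hwlen
      simp at hwlen
      omega
    refine ⟨Stmt6Aux.app R T w x, ⟨w, hwne, rfl⟩, ?_⟩
    obtain ⟨h1, h2, h3, h4, h5, h6⟩ := Stmt6Aux.mw_pos a b c ha hb hc0 w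
    obtain ⟨i3, i4, i9, i10⟩ := Stmt6Aux.mw_inv a b c ha hb hc1 hc w
    rcases hM : Stmt6Aux.mw a b c w with ⟨A, B, C, D⟩
    rw [hM] at h1 h2 h3 h4 h5 h6 i3 i4 i9 i10
    simp only at h1 h2 h3 h4 h5 h6 i3 i4
    simp only [Stmt6Aux.dt] at i9 i10
    rw [hwlen] at i10
    have hrep := Stmt6Aux.rep a b c ha hb hc0 R T hR hT w
    have hrx := hrep x hx0.le hx1
    have hrs := hrep s hs0 hs1
    rw [hM] at hrx hrs
    simp only at hrx hrs
    obtain ⟨hQx, hax⟩ := hrx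
    obtain ⟨hQs, has⟩ := hrs
    obtain ⟨blox, bhix⟩ := Stmt6Aux.cyl_lo A B C D x h5 h6 i9 hx0.le hx1 hQx
    obtain ⟨blos, bhis⟩ := Stmt6Aux.cyl_lo A B C D s h5 h6 i9 hs0 hs1 hQs
    have hShnn : 0 ≤ Stmt6Aux.Sh n := by
      unfold Stmt6Aux.Sh
      apply Finset.sum_nonneg; intro i _; positivity
    have hSpos : 0 < 1 + Stmt6Aux.kp a b c * Stmt6Aux.Sh n := by
      linarith [mul_nonneg hk0.le hShnn]
    have hwidth : D / (B + D) - C / (A + C) ≤ 1 / (1 + Stmt6Aux.kp a b c * Stmt6Aux.Sh n) :=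
      Stmt6Aux.cyl_width A B C D (Stmt6Aux.kp a b c * Stmt6Aux.Sh n) h5 h6 hSpos i10
    rw [Real.dist_eq]
    have et : t = ((1 - s) * C + s * D) / ((1 - s) * (A + C) + s * (B + D)) := by
      rw [← hws, has]
    rw [et, hax]
    exact Stmt6Aux.cyl_final blos bhis blox bhix hwidth hgoal
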